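/- arXiv:1409.4739 — 2 statements merged into one kernel-verified Lean document; each statement's English description precedes it below -/
import Mathlib

section
/- Fix β > 2, K > 0, λ > 0, s ∈ ℝ. With ν_n(s,r) = G_Z((s - β log(Kr) - n/β)/√n) (G_Z the standard normal CDF), the integral 2πλ ∫_0^∞ r ν_n(s,r) dr converges, as n → ∞, to (λπ/K²) exp(2s/β). -/
open MeasureTheory Real Filter

/-- Standard normal CDF. -/
noncomputable def stdGaussCDF (t : ℝ) : ℝ :=
  (Real.sqrt (2 * Real.pi))⁻¹ * ∫ x in Set.Iio t, Real.exp (-x ^ 2 / 2)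

open Set in
lemma nu_key (β K s : ℝ) (hβ : 0 < β) (hK : 0 < K) (n : ℝ) (hn : 0 < n) :
    (∫ r in Set.Ioi (0 : ℝ),
        r * stdGaussCDF ((s - β * Real.log (K * r) - n / β) / Real.sqrt n))
      = Real.exp (2 * s / β) / (2 * K ^ 2) := by
  have hsn : (0:ℝ) < Real.sqrt n := Real.sqrt_pos.mpr hn
  have hsn' : Real.sqrt n ≠ 0 := ne_of_gt hsn
  have hβ0 : β ≠ 0 := ne_of_gt hβ
  set b : ℝ := β / Real.sqrt n with hbdef
  have hb : 0 < b := div_pos hβ hsn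
  have hb0 : b ≠ 0 := ne_of_gt hb
  set a : ℝ := (s - β * Real.log K - n / β) / Real.sqrt n with hadef
  set g : ℝ → ℝ := fun x => Real.exp (-x ^ 2 / 2) with hgdef
  set C : ℝ := (Real.sqrt (2 * Real.pi))⁻¹ with hCdef
  set R : ℝ → ℝ := fun x => Real.exp ((a - x) / b) with hRdef
  set f : ℝ → ℝ → ℝ := fun r x => if x < a - b * Real.log r then r * g x else 0 with hfdef
  -- argument rewrite
  have harg : ∀ r ∈ Ioi (0:ℝ), (s - β * Real.log (K * r) - n / β) / Real.sqrt n
      = a - b * Real.log r := by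
    intro r hr
    rw [Real.log_mul (ne_of_gt hK) (ne_of_gt hr), hadef, hbdef]
    field_simp
    ring
  -- equivalence of conditions
  have hiff : ∀ x : ℝ, ∀ r ∈ Ioi (0:ℝ), (x < a - b * Real.log r ↔ r < R x) := by
    intro x r hr
    rw [hRdef]
    rw [← Real.log_lt_iff_lt_exp hr, lt_div_iff₀ hb]
    constructor <;> intro h <;> nlinarith
  -- f as indicator in x
  have hfx : ∀ r : ℝ, (fun x => f r x)
      = Set.indicator (Iio (a - b * Real.log r)) (fun x => r * g x) := by
    intro r; funext x
    simp [hfdef, Set.indicator_apply, Set.mem_Iio]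
  -- f as indicator in r (on Ioi 0)
  have hfr : ∀ x : ℝ, ∀ r ∈ Ioi (0:ℝ),
      f r x = Set.indicator (Ioo 0 (R x)) (fun r => r * g x) r := by
    intro x r hr
    simp only [hfdef, Set.indicator_apply, Set.mem_Ioo]
    have h := hiff x r hr
    have hr' := mem_Ioi.mp hr
    by_cases hc : x < a - b * Real.log r
    · rw [if_pos hc, if_pos ⟨hr', h.mp hc⟩]
    · rw [if_neg hc, if_neg fun hc2 => hc (h.mpr hc2.2)]
  have hgpos : ∀ x, 0 < g x := fun x => Real.exp_pos _
  have hRpos : ∀ x, 0 < R x := fun x => Real.exp_pos _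
  -- integrability of the r-indicator
  have hIndInt : ∀ x : ℝ, Integrable (Set.indicator (Ioo 0 (R x)) (fun r => r * g x)) := by
    intro x
    rw [integrable_indicator_iff measurableSet_Ioo]
    exact ((continuous_id.mul continuous_const).integrableOn_Icc).mono_set Ioo_subset_Icc_self
  -- value of the inner r-integral
  have hinner0 : ∀ x : ℝ,
      (∫ r in Ioi (0:ℝ), Set.indicator (Ioo 0 (R x)) (fun r => r * g x) r)
        = g x * R x ^ 2 / 2 := by
    intro x
    rw [integral_indicator measurableSet_Ioo, Measure.restrict_restrict measurableSet_Ioo,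
      Set.inter_eq_left.mpr Ioo_subset_Ioi_self]
    rw [← integral_Ioc_eq_integral_Ioo, ← intervalIntegral.integral_of_le (hRpos x).le]
    rw [intervalIntegral.integral_mul_const, integral_id]
    ring
  have hinner : ∀ x : ℝ, (∫ r in Ioi (0:ℝ), f r x) = g x * R x ^ 2 / 2 := by
    intro x
    rw [setIntegral_congr_fun measurableSet_Ioi (fun r hr => hfr x r hr), hinner0 x]
  have hinner' : ∀ x : ℝ, (∫ r in Ioi (0:ℝ), ‖f r x‖) = g x * R x ^ 2 / 2 := by
    intro x
    rw [setIntegral_congr_fun measurableSet_Ioi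
      (fun r hr => ?_), hinner0 x]
    show ‖f r x‖ = _
    rw [hfr x r hr, Real.norm_eq_abs, abs_of_nonneg]
    exact Set.indicator_nonneg (fun y hy => mul_nonneg (le_of_lt hy.1) (hgpos x).le) r
  -- pointwise gaussian form of the outer integrand
  have hpt : ∀ x : ℝ, g x * R x ^ 2 / 2
      = Real.exp (2 * a / b + 2 / b ^ 2) / 2 * Real.exp (-(1/2) * (x + 2 / b) ^ 2) := by
    intro x
    simp only [hgdef, hRdef]
    rw [sq (Real.exp ((a - x) / b)), ← Real.exp_add, div_mul_eq_mul_div, ← Real.exp_add,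
      ← Real.exp_add]
    congr 1
    rw [Real.exp_eq_exp]
    field_simp
    ring
  -- integrability of the outer integrand
  have hGR : Integrable (fun x => g x * R x ^ 2 / 2) := by
    have : Integrable (fun x : ℝ => Real.exp (-(1/2) * (x + 2 / b) ^ 2)) :=
      (integrable_exp_neg_mul_sq (by norm_num : (0:ℝ) < 1/2)).comp_add_right (2 / b)
    exact (this.const_mul _).congr (ae_of_all _ fun x => (hpt x).symm)
  -- measurability of uncurried f
  have hmeas : Measurable (Function.uncurry f) := by
    have hset : MeasurableSet {p : ℝ × ℝ | p.2 < a - b * Real.log p.1} :=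
      measurableSet_lt measurable_snd
        (measurable_const.sub ((Real.measurable_log.comp measurable_fst).const_mul b))
    exact Measurable.ite hset
      (measurable_fst.mul
        ((Real.measurable_exp.comp (((measurable_id.pow_const 2).neg).div_const 2)).comp
          measurable_snd))
      measurable_const
  -- slice integrability
  have hslice : ∀ x : ℝ, Integrable (fun r => f r x) (volume.restrict (Ioi 0)) := by
    intro x
    exact ((hIndInt x).restrict).congr
      ((ae_restrict_iff' measurableSet_Ioi).mpr (ae_of_all _ fun r hr => (hfr x r hr).symm))
  -- product integrability
  have hint : Integrable (Function.uncurry f) ((volume.restrict (Ioi 0)).prod volume) := by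
    rw [integrable_prod_iff' hmeas.aestronglyMeasurable]
    constructor
    · exact ae_of_all _ fun x => hslice x
    · exact hGR.congr (ae_of_all _ fun x => (hinner' x).symm)
  -- main computation
  have hmain : (∫ r in Ioi (0:ℝ),
      r * stdGaussCDF ((s - β * Real.log (K * r) - n / β) / Real.sqrt n))
      = C * ∫ x : ℝ, g x * R x ^ 2 / 2 := by
    rw [setIntegral_congr_fun measurableSet_Ioi (g := fun r => C * ∫ x : ℝ, f r x)
      (fun r hr => ?_)]
    · rw [integral_const_mul, integral_integral_swap hint]
      congr 1
      exact integral_congr_ae (ae_of_all _ fun x => hinner x)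
    · show r * stdGaussCDF _ = C * ∫ x : ℝ, f r x
      rw [harg r hr, stdGaussCDF]
      have : (∫ x : ℝ, f r x) = r * ∫ x in Iio (a - b * Real.log r), g x := by
        rw [show (fun x => f r x) = _ from hfx r, integral_indicator measurableSet_Iio,
          integral_const_mul]
      rw [this, ← hCdef]
      ring
  rw [hmain]
  -- evaluate gaussian integral
  have hG : (∫ x : ℝ, g x * R x ^ 2 / 2)
      = Real.exp (2 * a / b + 2 / b ^ 2) / 2 * Real.sqrt (2 * π) := by
    rw [integral_congr_ae (ae_of_all _ hpt), integral_const_mul,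
      integral_add_right_eq_self (fun y : ℝ => Real.exp (-(1/2) * y ^ 2)) (2 / b),
      integral_gaussian]
    norm_num
    ring
  rw [hG]
  have hsqrt : Real.sqrt (2 * π) ≠ 0 := ne_of_gt (Real.sqrt_pos.mpr (by positivity))
  have hC : C * Real.sqrt (2 * π) = 1 := by rw [hCdef]; field_simp
  have h1 : a / b = (s - β * Real.log K - n / β) / β := by
    rw [hadef, hbdef]
    field_simp
  have h2 : b ^ 2 = β ^ 2 / n := by rw [hbdef, div_pow, Real.sq_sqrt hn.le]
  have hexp : 2 * a / b + 2 / b ^ 2 = 2 * s / β - 2 * Real.log K := by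
    rw [show 2 * a / b = 2 * (a / b) by ring, h1, h2]
    field_simp
    ring
  have hK2 : Real.exp (2 * Real.log K) = K ^ 2 := by
    rw [two_mul, Real.exp_add, Real.exp_log hK, sq]
  rw [hexp, Real.exp_sub, hK2, hCdef]
  field_simp

/-- `2πλ ∫_0^∞ r ν_n(s,r) dr → (λπ/K²) e^(2s/β)` as `n → ∞`. -/
theorem nu_n_integral_tendsto (β K lam s : ℝ) (hβ : 2 < β) (hK : 0 < K)
    (hlam : 0 < lam) :
    Tendsto (fun n : ℝ =>
        2 * π * lam * ∫ r in Set.Ioi (0 : ℝ),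
          r * stdGaussCDF ((s - β * Real.log (K * r) - n / β) / Real.sqrt n))
      atTop (nhds (lam * π / K ^ 2 * Real.exp (2 * s / β))) := by
  have heq : ∀ᶠ n in atTop, (2 * π * lam * ∫ r in Set.Ioi (0 : ℝ),
      r * stdGaussCDF ((s - β * Real.log (K * r) - n / β) / Real.sqrt n))
      = lam * π / K ^ 2 * Real.exp (2 * s / β) := by
    filter_upwards [eventually_gt_atTop (0 : ℝ)] with n hn
    rw [nu_key β K s (by linarith) hK n hn]
    have hK0 : K ≠ 0 := ne_of_gt hK
    field_simp
  exact Tendsto.congr' (heq.mono fun n h => h.symm) tendsto_const_nhds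
end

section
/- Fix β > 2, K > 0, s ∈ ℝ. Suppose b_n > 0 satisfies log(b_n)/n → ∞, and set v_n = (s - β log(K b_n) - n/β)/√n. Then exp((2/β)(s - n/β - v_n √n)) · G_Z(v_n) → 0 as n → ∞, where G_Z is the standard normal CDF. -/
open Real Filter

lemma gauss_integrable : MeasureTheory.Integrable (fun x : ℝ => Real.exp (-x ^ 2 / 2)) := by
  have := integrable_exp_neg_mul_sq (by norm_num : (0:ℝ) < 1/2)
  convert this using 2 with x
  ring_nf

lemma stdGaussCDF_nonneg (t : ℝ) : 0 ≤ stdGaussCDF t := by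
  apply mul_nonneg (inv_nonneg.2 (Real.sqrt_nonneg _))
  exact MeasureTheory.setIntegral_nonneg measurableSet_Iio fun x _ => (Real.exp_pos _).le

lemma gauss_tail {t : ℝ} (ht : t ≤ -1) : stdGaussCDF t ≤ Real.exp (-t ^ 2 / 2) := by
  set a : ℝ := -t with ha
  have ha1 : 1 ≤ a := by simp only [ha]; linarith
  have ha0 : 0 < a := lt_of_lt_of_le one_pos ha1
  -- reflect the integral
  have hrefl : (∫ x in Set.Iio t, Real.exp (-x ^ 2 / 2))
      = ∫ x in Set.Ioi a, Real.exp (-x ^ 2 / 2) := by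
    have h1 : (∫ x in Set.Iio t, Real.exp (-x ^ 2 / 2))
        = ∫ x in Set.Iic t, Real.exp (-x ^ 2 / 2) := by
      rw [← MeasureTheory.integral_Iic_eq_integral_Iio]
    rw [h1]
    have h2 := integral_comp_neg_Iic t (fun x => Real.exp (-x ^ 2 / 2))
    have h3 : (∫ x in Set.Iic t, Real.exp (-(-x) ^ 2 / 2))
        = ∫ x in Set.Iic t, Real.exp (-x ^ 2 / 2) := by
      apply MeasureTheory.setIntegral_congr_fun measurableSet_Iic
      intro x _
      simp [neg_pow]
    rw [← h3, h2, ha]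
  -- FTC on (a, ∞) for x * exp (-x^2/2)
  have hderiv : ∀ x ∈ Set.Ioi a, HasDerivAt (fun y : ℝ => -Real.exp (-y ^ 2 / 2))
      (x * Real.exp (-x ^ 2 / 2)) x := by
    intro x _
    have h1 : HasDerivAt (fun y : ℝ => -y ^ 2 / 2) (-x) x := by
      have := ((hasDerivAt_pow 2 x).fun_neg).div_const 2
      exact this.congr_deriv (by push_cast; ring)
    have := (h1.exp).fun_neg
    exact this.congr_deriv (by rw [mul_comm]; ring)
  have hint : MeasureTheory.IntegrableOn (fun x : ℝ => x * Real.exp (-x ^ 2 / 2))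
      (Set.Ioi a) := by
    have := integrable_mul_exp_neg_mul_sq (by norm_num : (0:ℝ) < 1/2)
    have h2 : (fun x : ℝ => x * Real.exp (-(1/2) * x ^ 2))
        = fun x : ℝ => x * Real.exp (-x ^ 2 / 2) := by
      funext x; ring_nf
    rw [h2] at this
    exact this.integrableOn
  have htend : Tendsto (fun y : ℝ => -Real.exp (-y ^ 2 / 2)) atTop (nhds 0) := by
    rw [← neg_zero]
    apply Tendsto.neg
    apply Real.tendsto_exp_atBot.comp
    apply Tendsto.atBot_div_const (by norm_num : (0:ℝ) < 2)
    exact tendsto_neg_atBot_iff.mpr (tendsto_pow_atTop two_ne_zero)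
  have hFTC : (∫ x in Set.Ioi a, x * Real.exp (-x ^ 2 / 2)) = Real.exp (-a ^ 2 / 2) := by
    have hcont : ContinuousWithinAt (fun y : ℝ => -Real.exp (-y ^ 2 / 2)) (Set.Ici a) a :=
      (Continuous.neg (Real.continuous_exp.comp (by continuity))).continuousWithinAt
    have := MeasureTheory.integral_Ioi_of_hasDerivAt_of_tendsto hcont hderiv hint htend
    rw [this]; ring
  -- comparison on (a, ∞)
  have hcomp : (∫ x in Set.Ioi a, Real.exp (-x ^ 2 / 2))
      ≤ ∫ x in Set.Ioi a, x * Real.exp (-x ^ 2 / 2) := by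
    apply MeasureTheory.setIntegral_mono_on gauss_integrable.integrableOn hint
      measurableSet_Ioi
    intro x hx
    have hx1 : 1 ≤ x := le_trans ha1 (le_of_lt hx)
    nlinarith [Real.exp_pos (-x ^ 2 / 2)]
  have hI : (∫ x in Set.Iio t, Real.exp (-x ^ 2 / 2)) ≤ Real.exp (-t ^ 2 / 2) := by
    rw [hrefl]
    have : (-a ^ 2 / 2) = (-t ^ 2 / 2) := by rw [ha]; ring
    rw [← this, ← hFTC]
    exact hcomp
  have hI0 : 0 ≤ ∫ x in Set.Iio t, Real.exp (-x ^ 2 / 2) :=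
    MeasureTheory.setIntegral_nonneg measurableSet_Iio fun x _ => (Real.exp_pos _).le
  have hsqrt : 1 ≤ Real.sqrt (2 * Real.pi) := by
    rw [show (1:ℝ) = Real.sqrt 1 by simp]
    apply Real.sqrt_le_sqrt
    nlinarith [Real.pi_gt_three]
  calc stdGaussCDF t ≤ 1 * ∫ x in Set.Iio t, Real.exp (-x ^ 2 / 2) := by
        apply mul_le_mul_of_nonneg_right _ hI0
        exact inv_le_one_of_one_le₀ hsqrt
    _ = ∫ x in Set.Iio t, Real.exp (-x ^ 2 / 2) := one_mul _
    _ ≤ Real.exp (-t ^ 2 / 2) := hI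

/-- Outer-boundary integrated term vanishes: if `log(b_n)/n → ∞` and
`v_n = (s - β log(K b_n) - n/β)/√n`, then
`exp((2/β)(s - n/β - v_n √n)) G_Z(v_n) → 0`. -/
theorem outer_boundary_term_vanishes (β K s : ℝ) (hβ : 2 < β) (hK : 0 < K)
    (b : ℕ → ℝ) (hb : ∀ n, 0 < b n)
    (hblog : Tendsto (fun n : ℕ => Real.log (b n) / (n : ℝ)) atTop atTop) :
    Tendsto (fun n : ℕ =>
        Real.exp ((2 / β) * (s - (n : ℝ) / β -
            ((s - β * Real.log (K * b n) - (n : ℝ) / β) / Real.sqrt n) *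
              Real.sqrt n)) *
          stdGaussCDF ((s - β * Real.log (K * b n) - (n : ℝ) / β) / Real.sqrt n))
      atTop (nhds 0) := by
  have hβ0 : 0 < β := by linarith
  -- eventual bounds
  have hcast : Tendsto (fun n : ℕ => (n : ℝ)) atTop atTop := tendsto_natCast_atTop_atTop
  have hub : ∀ᶠ n : ℕ in atTop,
      Real.exp ((2 / β) * (s - (n : ℝ) / β -
            ((s - β * Real.log (K * b n) - (n : ℝ) / β) / Real.sqrt n) *
              Real.sqrt n)) *
          stdGaussCDF ((s - β * Real.log (K * b n) - (n : ℝ) / β) / Real.sqrt n)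
        ≤ Real.exp (-(n : ℝ)) := by
    filter_upwards [hblog.eventually_ge_atTop 7, hcast.eventually_ge_atTop 1,
      hcast.eventually_ge_atTop |s|, hcast.eventually_ge_atTop |Real.log K|]
      with n h7 hn1 hs hlK
    have hn0 : (0:ℝ) < n := lt_of_lt_of_le one_pos hn1
    have hlb : 7 * (n:ℝ) ≤ Real.log (b n) := by
      have := (le_div_iff₀ hn0).mp h7
      linarith
    set L : ℝ := Real.log (K * b n) with hLdef
    clear_value L
    have hLeq : L = Real.log K + Real.log (b n) := by
      rw [hLdef]; exact Real.log_mul (ne_of_gt hK) (ne_of_gt (hb n))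
    have hL : 6 * (n:ℝ) ≤ L := by
      have h1 : -(n:ℝ) ≤ Real.log K := by
        have := neg_abs_le (Real.log K)
        linarith
      rw [hLeq]; linarith
    have hLpos : 0 < L := by linarith
    have hsq : (0:ℝ) < Real.sqrt n := Real.sqrt_pos.mpr hn0
    set num : ℝ := s - β * L - (n:ℝ) / β with hnum
    clear_value num
    set v : ℝ := num / Real.sqrt n with hv
    clear_value v
    -- numerator bounds
    have hnβ : 0 ≤ (n:ℝ) / β := div_nonneg hn0.le hβ0.le
    have hsn : s ≤ (n:ℝ) := le_trans (le_abs_self s) hs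
    have hβL : 2 * L ≤ β * L := by nlinarith
    have hnL : (n:ℝ) ≤ L := by linarith
    have hnumle : num ≤ -L := by rw [hnum]; linarith
    -- v * sqrt n = num
    have hvs : v * Real.sqrt n = num := by
      rw [hv]; exact div_mul_cancel₀ _ (ne_of_gt hsq)
    -- exponential argument equals 2L
    have hA : (2 / β) * (s - (n : ℝ) / β - v * Real.sqrt n) = 2 * L := by
      rw [hvs, hnum]
      field_simp
      ring
    -- v ≤ -1
    have hvneg : v ≤ -1 := by
      rw [hv, div_le_iff₀ hsq]
      have h1 : Real.sqrt n ≤ (n:ℝ) := by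
        have h2 := Real.sqrt_le_sqrt (show (n:ℝ) ≤ (n:ℝ)^2 by nlinarith)
        rwa [Real.sqrt_sq hn0.le] at h2
      linarith
    -- v^2 = num^2 / n
    have hv2 : v ^ 2 = num ^ 2 / (n:ℝ) := by
      rw [hv, div_pow, Real.sq_sqrt hn0.le]
    -- key: 2L - v^2/2 ≤ -n
    have hkey : 2 * L + (-v ^ 2 / 2) ≤ -(n:ℝ) := by
      have h1 : L ^ 2 ≤ num ^ 2 := by nlinarith
      have h2 : 6 * (n:ℝ) * L ≤ L ^ 2 := by nlinarith
      have h3 : 3 * L ≤ num ^ 2 / (2 * (n:ℝ)) := by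
        rw [le_div_iff₀ (by linarith : (0:ℝ) < 2 * (n:ℝ))]
        nlinarith
      have h4 : num ^ 2 / (2 * (n:ℝ)) = v ^ 2 / 2 := by
        rw [hv2]; ring
      rw [h4] at h3
      linarith
    calc Real.exp ((2 / β) * (s - (n : ℝ) / β - v * Real.sqrt n)) * stdGaussCDF v
        ≤ Real.exp (2 * L) * Real.exp (-v ^ 2 / 2) := by
          rw [hA]
          exact mul_le_mul_of_nonneg_left (gauss_tail hvneg) (Real.exp_pos _).le
      _ = Real.exp (2 * L + (-v ^ 2 / 2)) := (Real.exp_add _ _).symm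
      _ ≤ Real.exp (-(n:ℝ)) := Real.exp_le_exp.mpr hkey
  have hlb0 : ∀ᶠ n : ℕ in atTop, (0:ℝ) ≤
      Real.exp ((2 / β) * (s - (n : ℝ) / β -
            ((s - β * Real.log (K * b n) - (n : ℝ) / β) / Real.sqrt n) *
              Real.sqrt n)) *
          stdGaussCDF ((s - β * Real.log (K * b n) - (n : ℝ) / β) / Real.sqrt n) :=
    Eventually.of_forall fun n =>
      mul_nonneg (Real.exp_pos _).le (stdGaussCDF_nonneg _)
  have hexp : Tendsto (fun n : ℕ => Real.exp (-(n : ℝ))) atTop (nhds 0) :=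
    Real.tendsto_exp_atBot.comp (tendsto_neg_atBot_iff.mpr hcast)
  exact tendsto_of_tendsto_of_tendsto_of_le_of_le' tendsto_const_nhds hexp hlb0 hub
end
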